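/- Let μ be a Borel probability measure on [0,1] with μ(X) = μ({1−t : t ∈ X}) for every Borel set X ⊆ [0,1], let f(x) = ∫₀¹ x/((1−t)x+t) dμ(t) for x > 0, and let r be the scalar-curvature function of f. Set m = 4·∫₀¹ t(1−t) dμ(t), E₂ = 16·∫₀¹ t²(1−t)² dμ(t), E₃ = 64·∫₀¹ t³(1−t)³ dμ(t), and σ² = E₂ − m². If m·(3 − 2m) < 5σ², or if m·(3 − 2m) = 5σ² and −44m³ + 70m² + 114m < 98·E₃, then r has a local minimum at the origin: there exists ε > 0 such that r(a) ≥ 6 + 36·f″(1) for all a with 0 < |a| < ε, where lim_{a→0} r(a) = 6 + 36·f″(1). -/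

import Mathlib

open MeasureTheory Filter Topology

/-- The scalar-curvature function `r(a)` of the monotone metric on `2×2` density
matrices induced by `f`, at the state with eigenvalues `(1±a)/2`;
here `c = (1−a)/(1+a)`. -/
noncomputable def scurv (f : ℝ → ℝ) (a : ℝ) : ℝ :=
  14*(a - 1) * (deriv f ((1-a)/(1+a)))^2 / ((1+a)^3 * (f ((1-a)/(1+a)))^2)
    + 2*(a^2 + 7*a - 6) * deriv f ((1-a)/(1+a)) / ((1+a)^2 * a * f ((1-a)/(1+a)))
    + 8*(1 - a) * iteratedDeriv 2 f ((1-a)/(1+a)) / ((1+a)^3 * f ((1-a)/(1+a)))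
    + 2*(1+a) * f ((1-a)/(1+a)) / a^2
    + (3*a^3 + 5*a^2 + 8*a - 4) / (2*(1+a)*a^2)

noncomputable def Epoly (a p1 p2 ri rj rk : ℝ) : ℝ :=
  (-32)*rk + (-24)*rj + (4)*ri + (60)*p2 + (-24)*a*rj + (12)*a*ri + (12)*a*p2 + (-20)*a*p1 + (-40)*a*p1*p2 + (64)*a*p1^2 + (-32)*a*p1^3 + (32)*a^2*rk + (-24)*a^2*rj + (12)*a^2*ri + (60)*a^2*p2 + (-32)*a^2*p1*rk + (32)*a^2*p1*rj + (-24)*a^2*p1*ri + (-80)*a^2*p1*p2 + (-24)*a^3*rj + (12)*a^3*ri + (-32)*a^3*p2 + (-8)*a^3*p2^2 + (32)*a^3*p1*rj + (-16)*a^3*p1*ri + (96)*a^3*p1*p2 + (-24)*a^3*p1^2 + (-60)*a^3*p1^2*p2 + (28)*a^3*p1^3 + (-32)*a^4*ri + (-32)*a^4*p2*rk + (88)*a^4*p2*rj + (112)*a^4*p2*ri + (-220)*a^4*p2^2 + (32)*a^4*p1*rk + (-80)*a^4*p1*rj + (-16)*a^4*p1*ri + (200)*a^4*p1*p2 + (-60)*a^4*p1^2*ri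 + (-28)*a^5*rj^2 + (-32)*a^5*ri*rk + (-24)*a^5*ri*rj + (8)*a^5*ri^2 + (228)*a^5*p2*rj + (16)*a^5*p2*ri + (-227)*a^5*p2^2 + (-80)*a^5*p1*rj + (40)*a^5*p1*ri + (24)*a^5*p1*p2 + (-24)*a^5*p1*p2^2 + (48)*a^5*p1^2*p2 + (4)*a^5*p1^3 + (-56)*a^6*rj^2 + (4)*a^6*ri*rj + (12)*a^6*ri^2 + (32)*a^6*p2*rk + (144)*a^6*p2*rj + (-118)*a^6*p2*ri + (-10)*a^6*p2^2 + (24)*a^6*p1*ri + (-48)*a^6*p1*p2*ri + (48)*a^6*p1^2*ri + (-28)*a^7*rj^2 + (32)*a^7*ri*rk + (32)*a^7*ri*rj + (-3)*a^7*ri^2 + (4)*a^7*p2*rj + (-12)*a^7*p2*ri + (-15)*a^7*p2^2 + (4)*a^7*p2^3 + (-24)*a^7*p1*ri^2 + (12)*a^7*p1*p2^2 + (12)*a^7*p1^2*p2 + (4)*a^8*ri*rj + (-2)*a^8*ri^2 + (-30)*a^8*p2*ri + (12)*a^8*p2^2*ri + (24)*a^8*p1*p2*ri + (12)*a^8*p1^2*ri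 + (-15)*a^9*ri^2 + (12)*a^9*p2*ri^2 + (-8)*a^9*p2^3 + (12)*a^9*p1*ri^2 + (12)*a^9*p1*p2^2 + (4)*a^10*ri^3 + (-24)*a^10*p2^2*ri + (24)*a^10*p1*p2*ri + (-24)*a^11*p2*ri^2 + (4)*a^11*p2^3 + (12)*a^11*p1*ri^2 + (-8)*a^12*ri^3 + (12)*a^12*p2^2*ri + (12)*a^13*p2*ri^2 + (4)*a^14*ri^3

set_option maxHeartbeats 1000000 in
lemma key_poly (a p1 p2 ri rj rk i j k : ℝ)
    (hi : i = 1 + p1*a^2 + p2*a^4 + a^5*ri)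
    (hj : j = 1/2 - p1*a + 3/2*p1*a^2 - 2*p2*a^3 + a^4*rj)
    (hk : k = (1-p1)/4 + 3/2*(p1-p2)*a^2 + a^3*rk) :
    (-28*a^2*(1+a)^2*j^2 + 4*a*(a^2+7*a-6)*(1+a)*j*i - 32*a^2*(1-a)*(1+a)*k*i
      + 4*(1-a^2)^2*i^3 + (3*a^3+5*a^2+8*a-4)*(1-a)*i^2)
     - (18*p1-12)*(2*a^2*(1-a)*(1+a)*i^2)
    = a^4 * ((100*p2 - 20 - 20*p1 - 60*p1^2) + a * Epoly a p1 p2 ri rj rk) := by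
  subst hi hj hk
  simp only [Epoly]
  ring

set_option maxHeartbeats 1000000 in
lemma scurv_algebra (a i j k fc fd fdd : ℝ) (ha : a ≠ 0) (h1 : (1:ℝ)+a ≠ 0)
    (h2 : (1:ℝ)-a ≠ 0) (hi : i ≠ 0)
    (hfc : fc = (1-a)*i) (hfd : fd = (1+a)^2*j) (hfdd : fdd = -2*(1+a)^3*k) :
    14*(a - 1) * fd^2 / ((1+a)^3 * fc^2)
      + 2*(a^2 + 7*a - 6) * fd / ((1+a)^2 * a * fc)
      + 8*(1 - a) * fdd / ((1+a)^3 * fc)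
      + 2*(1+a) * fc / a^2
      + (3*a^3 + 5*a^2 + 8*a - 4) / (2*(1+a)*a^2)
    = ((-28*a^2*(1+a)^2*j^2 + 4*a*(a^2+7*a-6)*(1+a)*j*i - 32*a^2*(1-a)*(1+a)*k*i
        + 4*(1-a^2)^2*i^3 + (3*a^3+5*a^2+8*a-4)*(1-a)*i^2))
      / (2*a^2*(1-a)*(1+a)*i^2) := by
  subst hfc hfd hfdd
  field_simp
  ring

lemma split_int (ν : Measure ℝ) [IsProbabilityMeasure ν]
    (hpow : ∀ n : ℕ, Integrable (fun t : ℝ => (1-2*t)^n) ν)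
    (c0 c1 c2 c3 c4 c5 : ℝ) (r : ℝ → ℝ) (hr : Integrable r ν) :
    ∫ t, (c0 + c1*(1-2*t)^1 + c2*(1-2*t)^2 + c3*(1-2*t)^3 + c4*(1-2*t)^4 + c5*r t) ∂ν
    = c0 + c1*(∫ t, (1-2*t)^1 ∂ν) + c2*(∫ t, (1-2*t)^2 ∂ν) + c3*(∫ t, (1-2*t)^3 ∂ν)
      + c4*(∫ t, (1-2*t)^4 ∂ν) + c5*(∫ t, r t ∂ν) := by
  have I0 : Integrable (fun _ : ℝ => c0) ν := integrable_const _
  have I1 : Integrable (fun t : ℝ => c1*(1-2*t)^1) ν := (hpow 1).const_mul _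
  have I2 : Integrable (fun t : ℝ => c2*(1-2*t)^2) ν := (hpow 2).const_mul _
  have I3 : Integrable (fun t : ℝ => c3*(1-2*t)^3) ν := (hpow 3).const_mul _
  have I4 : Integrable (fun t : ℝ => c4*(1-2*t)^4) ν := (hpow 4).const_mul _
  have I5 : Integrable (fun t : ℝ => c5*r t) ν := hr.const_mul _
  have S1 : Integrable (fun t : ℝ => c0 + c1*(1-2*t)^1) ν := I0.add I1
  have S2 : Integrable (fun t : ℝ => c0 + c1*(1-2*t)^1 + c2*(1-2*t)^2) ν := S1.add I2
  have S3 : Integrable (fun t : ℝ => c0 + c1*(1-2*t)^1 + c2*(1-2*t)^2 + c3*(1-2*t)^3) ν := S2.add I3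
  have S4 : Integrable (fun t : ℝ => c0 + c1*(1-2*t)^1 + c2*(1-2*t)^2 + c3*(1-2*t)^3
      + c4*(1-2*t)^4) ν := S3.add I4
  rw [integral_add S4 I5, integral_add S3 I4, integral_add S2 I3, integral_add S1 I2,
      integral_add I0 I1,
      integral_const_mul, integral_const_mul, integral_const_mul, integral_const_mul,
      integral_const_mul, integral_const]
  simp [measure_univ]

noncomputable def RIf (ν : Measure ℝ) (a : ℝ) : ℝ := ∫ t, (1-2*t)^5/(1-a*(1-2*t)) ∂ν
noncomputable def RJf (ν : Measure ℝ) (a : ℝ) : ℝ :=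
  ∫ t, t*(1-2*t)^4*(5-4*(a*(1-2*t)))/(1-a*(1-2*t))^2 ∂ν
noncomputable def RKf (ν : Measure ℝ) (a : ℝ) : ℝ :=
  ∫ t, t*(1-t)*(1-2*t)^3*(10-15*(a*(1-2*t))+6*(a*(1-2*t))^2)/(1-a*(1-2*t))^3 ∂ν
noncomputable def I1f (ν : Measure ℝ) (a : ℝ) : ℝ := ∫ t, 1/(1-a*(1-2*t)) ∂ν
noncomputable def Jff (ν : Measure ℝ) (a : ℝ) : ℝ := ∫ t, t/(1-a*(1-2*t))^2 ∂ν
noncomputable def Kff (ν : Measure ℝ) (a : ℝ) : ℝ := ∫ t, t*(1-t)/(1-a*(1-2*t))^3 ∂ν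
set_option maxHeartbeats 2000000 in
/-- moment criterion (Theorem 3.2 of the paper) for the scalar
curvature of the metric induced by a symmetric measure `μ` to have a local
minimum at the origin; `m`, `E₂`, `E₃` are the moments of the pushforward of `μ`
under `t ↦ 4t(1−t)`, and `σ² = E₂ − m²`. -/
theorem stmt_11 (μ : Measure ℝ) [IsProbabilityMeasure μ]
    (hsupp : μ (Set.Icc 0 1) = 1)
    (hsym : ∀ X : Set ℝ, MeasurableSet X → X ⊆ Set.Icc 0 1 →
      μ X = μ ((fun t => 1 - t) '' X))
    (f : ℝ → ℝ)
    (hf : ∀ x > (0:ℝ), f x = ∫ t in Set.Icc (0:ℝ) 1, x / ((1 - t) * x + t) ∂μ)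
    (m E2 E3 : ℝ)
    (hm : m = 4 * ∫ t in Set.Icc (0:ℝ) 1, t * (1 - t) ∂μ)
    (hE2 : E2 = 16 * ∫ t in Set.Icc (0:ℝ) 1, t^2 * (1 - t)^2 ∂μ)
    (hE3 : E3 = 64 * ∫ t in Set.Icc (0:ℝ) 1, t^3 * (1 - t)^3 ∂μ)
    (hcond : m * (3 - 2*m) < 5 * (E2 - m^2) ∨
      (m * (3 - 2*m) = 5 * (E2 - m^2) ∧
        -44*m^3 + 70*m^2 + 114*m < 98 * E3)) :
    Tendsto (scurv f) (𝓝[≠] 0) (𝓝 (6 + 36 * iteratedDeriv 2 f 1)) ∧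
    ∃ ε > (0:ℝ), ∀ a : ℝ, 0 < |a| → |a| < ε →
      scurv f a ≥ 6 + 36 * iteratedDeriv 2 f 1 := by
  have hIccMeas : MeasurableSet (Set.Icc (0:ℝ) 1) := measurableSet_Icc
  set ν := μ.restrict (Set.Icc (0:ℝ) 1) with hν
  haveI hprob : IsProbabilityMeasure ν := by
    constructor
    rw [hν, Measure.restrict_apply MeasurableSet.univ, Set.univ_inter, hsupp]
  -- integrability helper
  have hintb : ∀ (g : ℝ → ℝ) (C : ℝ), Measurable g →
      (∀ t ∈ Set.Icc (0:ℝ) 1, ‖g t‖ ≤ C) → Integrable g ν := by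
    intro g C hg hb
    refine Integrable.mono' (integrable_const C) hg.aestronglyMeasurable ?_
    rw [hν]
    exact (ae_restrict_iff' hIccMeas).2 (ae_of_all _ hb)
  have hs1 : ∀ t : ℝ, t ∈ Set.Icc (0:ℝ) 1 → |1-2*t| ≤ 1 := by
    intro t ht
    rw [abs_le]
    exact ⟨by linarith [ht.2], by linarith [ht.1]⟩
  have hpow : ∀ n : ℕ, Integrable (fun t : ℝ => (1-2*t)^n) ν := by
    intro n
    refine hintb _ 1 (by fun_prop) ?_
    intro t ht
    rw [Real.norm_eq_abs, abs_pow]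
    exact pow_le_one₀ (abs_nonneg _) (hs1 t ht)
  have hsum3 : ∀ c0 c2 c4 c6 : ℝ,
      ∫ t, (c0 + c2*(1-2*t)^2 + c4*(1-2*t)^4 + c6*(1-2*t)^6) ∂ν
      = c0 + c2*(∫ t, (1-2*t)^2 ∂ν) + c4*(∫ t, (1-2*t)^4 ∂ν) + c6*(∫ t, (1-2*t)^6 ∂ν) := by
    intro c0 c2 c4 c6
    have I0 : Integrable (fun _ : ℝ => c0) ν := integrable_const _
    have I2 : Integrable (fun t : ℝ => c2*(1-2*t)^2) ν := (hpow 2).const_mul _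
    have I4 : Integrable (fun t : ℝ => c4*(1-2*t)^4) ν := (hpow 4).const_mul _
    have I6 : Integrable (fun t : ℝ => c6*(1-2*t)^6) ν := (hpow 6).const_mul _
    have S2 : Integrable (fun t : ℝ => c0 + c2*(1-2*t)^2) ν := I0.add I2
    have S4 : Integrable (fun t : ℝ => c0 + c2*(1-2*t)^2 + c4*(1-2*t)^4) ν := S2.add I4
    rw [integral_add S4 I6, integral_add S2 I4, integral_add I0 I2,
        integral_const_mul, integral_const_mul, integral_const_mul, integral_const]
    simp [measure_univ]
  set P1 := ∫ t, (1-2*t)^2 ∂ν with hP1def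
  set P2 := ∫ t, (1-2*t)^4 ∂ν with hP2def
  set P3 := ∫ t, (1-2*t)^6 ∂ν with hP3def
  -- moment identities
  have hmP : m = 1 - P1 := by
    have h4 : (4:ℝ) * ∫ t, t*(1-t) ∂ν
        = ∫ t, ((1:ℝ) + (-1)*(1-2*t)^2 + 0*(1-2*t)^4 + 0*(1-2*t)^6) ∂ν := by
      rw [← integral_const_mul]
      congr 1
      funext t
      ring
    rw [hm, h4, hsum3]
    ring
  have hE2P : E2 = 1 - 2*P1 + P2 := by
    have h4 : (16:ℝ) * ∫ t, t^2*(1-t)^2 ∂ν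
        = ∫ t, ((1:ℝ) + (-2)*(1-2*t)^2 + 1*(1-2*t)^4 + 0*(1-2*t)^6) ∂ν := by
      rw [← integral_const_mul]
      congr 1
      funext t
      ring
    rw [hE2, h4, hsum3]
    ring
  have hE3P : E3 = 1 - 3*P1 + 3*P2 - P3 := by
    have h4 : (64:ℝ) * ∫ t, t^3*(1-t)^3 ∂ν
        = ∫ t, ((1:ℝ) + (-3)*(1-2*t)^2 + 3*(1-2*t)^4 + (-1)*(1-2*t)^6) ∂ν := by
      rw [← integral_const_mul]
      congr 1
      funext t
      ring
    rw [hE3, h4, hsum3]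
    ring
  -- bounds on moments
  have hP1n : 0 ≤ P1 := integral_nonneg (fun t => by positivity)
  have hP2n : 0 ≤ P2 := integral_nonneg (fun t => by positivity)
  have hP3n : 0 ≤ P3 := integral_nonneg (fun t => by positivity)
  have hP1le : P1 ≤ 1 := by
    have : P1 ≤ ∫ _, (1:ℝ) ∂ν := by
      rw [hP1def, hν]
      refine setIntegral_mono_on (hpow 2) (integrable_const _) hIccMeas ?_
      intro t ht
      calc (1-2*t)^2 = |1-2*t|^2 := (sq_abs _).symm
        _ ≤ 1 := pow_le_one₀ (abs_nonneg _) (hs1 t ht)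
    simpa using this
  -- Cauchy-Schwarz : P2^2 ≤ P1 * P3
  have hCS : P2^2 ≤ P1 * P3 := by
    have hq : ∀ L : ℝ, 0 ≤ P3*(L*L) + (-2*P2)*L + P1 := by
      intro L
      have h0 : 0 ≤ ∫ t, (L*(1-2*t)^3 - (1-2*t))^2 ∂ν :=
        integral_nonneg (fun t => sq_nonneg _)
      have he : ∫ t, (L*(1-2*t)^3 - (1-2*t))^2 ∂ν
          = ∫ t, ((0:ℝ) + 1*(1-2*t)^2 + (-2*L)*(1-2*t)^4 + (L*L)*(1-2*t)^6) ∂ν := by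
        congr 1
        funext t
        ring
      rw [he, hsum3] at h0
      linarith
    have hd := discrim_le_zero hq
    have hd' : (-2*P2)^2 - 4*P3*P1 ≤ 0 := by simpa [discrim, sq] using hd
    nlinarith [hd']
  rcases hcond with hlt | ⟨heq, hlt2⟩
  swap
  · -- case 2 is vacuous
    exfalso
    rw [hmP, hE2P] at heq
    rw [hmP, hE3P] at hlt2
    have h5P2 : 5*P2 = 1 + P1 + 3*P1^2 := by linear_combination -heq
    -- 490*P3 < 84 - 566*P1 + 1192*P1^2 - 220*P1^3
    have h490 : 490*P3 < 84 - 566*P1 + 1192*P1^2 - 220*P1^3 := by nlinarith [hlt2, h5P2]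
    nlinarith [hCS, h490, h5P2, hP1n, hP1le, hP3n, hP2n,
      mul_le_mul_of_nonneg_left h490.le hP1n,
      mul_nonneg hP1n hP3n, sq_nonneg (1-P1), sq_nonneg P1,
      mul_nonneg (mul_nonneg hP1n hP1n) hP1n,
      mul_le_mul_of_nonneg_left hP1le (mul_nonneg hP1n hP1n)]
  · -- CASE 1 : strict inequality
    have hw4 : (0:ℝ) < 100*P2 - 20 - 20*P1 - 60*P1^2 := by
      rw [hmP, hE2P] at hlt
      nlinarith [hlt]
    -- symmetry: odd moments vanish
    have hmes : Measurable (fun t : ℝ => 1 - t) := by fun_prop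
    have hmap : ν.map (fun t : ℝ => 1 - t) = ν := by
      rw [hν]
      ext A hA
      rw [Measure.map_apply hmes hA, Measure.restrict_apply (hmes hA), Measure.restrict_apply hA]
      have himg : (fun t : ℝ => 1 - t) ⁻¹' A ∩ Set.Icc 0 1
          = (fun t : ℝ => 1 - t) '' (A ∩ Set.Icc 0 1) := by
        ext u
        constructor
        · rintro ⟨huA, hu0, hu1⟩
          exact ⟨1-u, ⟨by simpa using huA, ⟨by linarith, by linarith⟩⟩, by ring⟩
        · rintro ⟨v, ⟨hvA, hv0, hv1⟩, rfl⟩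
          refine ⟨by simpa using hvA, ?_⟩
          simp only [Set.mem_Icc]
          constructor
          · show (0:ℝ) ≤ 1 - v
            linarith
          · show (1:ℝ) - v ≤ 1
            linarith
      rw [himg, ← hsym (A ∩ Set.Icc 0 1) (hA.inter hIccMeas) Set.inter_subset_right]
    have hodd : ∀ n : ℕ, Odd n → ∫ t, (1-2*t)^n ∂ν = 0 := by
      intro n hn
      have h1 : ∫ t, (1-2*t)^n ∂ν = ∫ t, (1-2*(1-t))^n ∂ν := by
        conv_lhs => rw [← hmap]
        rw [integral_map hmes.aemeasurable (by fun_prop : Measurable fun t : ℝ => (1-2*t)^n).aestronglyMeasurable]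
      have h2 : (fun t : ℝ => (1-2*(1-t))^n) = fun t : ℝ => -((1-2*t)^n) := by
        funext t
        rw [show (1-2*(1-t)) = -(1-2*t) by ring, hn.neg_pow]
      rw [h2, integral_neg] at h1
      linarith
    -- denominator bounds
    have huab : ∀ a t : ℝ, |a| ≤ 1/2 → t ∈ Set.Icc (0:ℝ) 1 → |a*(1-2*t)| ≤ 1/2 := by
      intro a t ha ht
      rw [abs_mul]
      calc |a| * |1-2*t| ≤ (1/2)*1 :=
            mul_le_mul ha (hs1 t ht) (abs_nonneg _) (by norm_num)
        _ = 1/2 := by norm_num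
    have hden : ∀ a t : ℝ, |a| ≤ 1/2 → t ∈ Set.Icc (0:ℝ) 1 → 1/2 ≤ 1 - a*(1-2*t) := by
      intro a t ha ht
      have h2 := (abs_le.mp (huab a t ha ht)).2
      linarith
    -- integrability of the remainder integrands
    have hRIint : ∀ a : ℝ, |a| ≤ 1/2 →
        Integrable (fun t : ℝ => (1-2*t)^5/(1-a*(1-2*t))) ν := by
      intro a ha
      refine hintb _ 2 (by fun_prop) ?_
      intro t ht
      have hd := hden a t ha ht
      have h1 : |(1-2*t)^5| ≤ 1 := by
        rw [abs_pow]; exact pow_le_one₀ (abs_nonneg _) (hs1 t ht)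
      rw [Real.norm_eq_abs, abs_div, abs_of_pos (by linarith : (0:ℝ) < 1-a*(1-2*t)),
        div_le_iff₀ (by linarith)]
      nlinarith
    have hRJint : ∀ a : ℝ, |a| ≤ 1/2 →
        Integrable (fun t : ℝ => t*(1-2*t)^4*(5-4*(a*(1-2*t)))/(1-a*(1-2*t))^2) ν := by
      intro a ha
      refine hintb _ 28 (by fun_prop) ?_
      intro t ht
      have hd := hden a t ha ht
      have hu := abs_le.mp (huab a t ha ht)
      have h1 : |(1-2*t)^4| ≤ 1 := by
        rw [abs_pow]; exact pow_le_one₀ (abs_nonneg _) (hs1 t ht)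
      have h2 : |t| ≤ 1 := by rw [abs_of_nonneg ht.1]; exact ht.2
      have h3 : |5-4*(a*(1-2*t))| ≤ 7 := by rw [abs_le]; constructor <;> linarith
      have h4 : |t*(1-2*t)^4*(5-4*(a*(1-2*t)))| ≤ 7 := by
        rw [abs_mul, abs_mul]
        calc |t| * |(1-2*t)^4| * |5-4*(a*(1-2*t))| ≤ 1 * 1 * 7 := by
              gcongr <;> first | exact h1 | exact h2 | exact h3
          _ = 7 := by norm_num
      rw [Real.norm_eq_abs, abs_div, abs_of_pos (by positivity : (0:ℝ) < (1-a*(1-2*t))^2),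
        div_le_iff₀ (by positivity)]
      nlinarith
    have hRKint : ∀ a : ℝ, |a| ≤ 1/2 →
        Integrable (fun t : ℝ =>
          t*(1-t)*(1-2*t)^3*(10-15*(a*(1-2*t))+6*(a*(1-2*t))^2)/(1-a*(1-2*t))^3) ν := by
      intro a ha
      refine hintb _ 40 (by fun_prop) ?_
      intro t ht
      have hd := hden a t ha ht
      have hu := abs_le.mp (huab a t ha ht)
      have husq : (a*(1-2*t))^2 ≤ 1/4 := by nlinarith
      have h1 : |(1-2*t)^3| ≤ 1 := by
        rw [abs_pow]; exact pow_le_one₀ (abs_nonneg _) (hs1 t ht)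
      have h2 : |t*(1-t)| ≤ 1/4 := by
        rw [abs_of_nonneg (mul_nonneg ht.1 (by linarith [ht.2]) : (0:ℝ) ≤ t*(1-t))]
        nlinarith [sq_nonneg (1-2*t)]
      have h3 : |10-15*(a*(1-2*t))+6*(a*(1-2*t))^2| ≤ 19 := by
        rw [abs_le]; constructor <;> nlinarith
      have h4 : |t*(1-t)*(1-2*t)^3*(10-15*(a*(1-2*t))+6*(a*(1-2*t))^2)| ≤ 19/4 := by
        rw [abs_mul, abs_mul]
        calc |t*(1-t)| * |(1-2*t)^3| * |10-15*(a*(1-2*t))+6*(a*(1-2*t))^2|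
            ≤ (1/4) * 1 * 19 := by gcongr <;> first | exact h1 | exact h2 | exact h3
          _ = 19/4 := by norm_num
      have h5 : (1/8:ℝ) ≤ (1-a*(1-2*t))^3 := by nlinarith
      rw [Real.norm_eq_abs, abs_div, abs_of_pos (by positivity : (0:ℝ) < (1-a*(1-2*t))^3),
        div_le_iff₀ (by positivity)]
      nlinarith
    have hI1int : ∀ a : ℝ, |a| ≤ 1/2 →
        Integrable (fun t : ℝ => 1/(1-a*(1-2*t))) ν := by
      intro a ha
      refine hintb _ 2 (by fun_prop) ?_
      intro t ht
      have hd := hden a t ha ht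
      rw [Real.norm_eq_abs, abs_div, abs_of_pos (by linarith : (0:ℝ) < 1-a*(1-2*t)),
        div_le_iff₀ (by linarith)]
      simp only [abs_one]
      linarith
    -- Taylor identities
    have hTI : ∀ a : ℝ, |a| ≤ 1/2 →
        I1f ν a = 1 + P1*a^2 + P2*a^4 + a^5*RIf ν a := by
      intro a ha
      have e1 : I1f ν a = ∫ t, ((1:ℝ) + a*(1-2*t)^1 + a^2*(1-2*t)^2 + a^3*(1-2*t)^3
          + a^4*(1-2*t)^4 + a^5*((1-2*t)^5/(1-a*(1-2*t)))) ∂ν := by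
        rw [I1f, hν]
        refine setIntegral_congr_fun hIccMeas fun t ht => ?_
        have hd := hden a t ha ht
        have hne : 1-a*(1-2*t) ≠ 0 := by linarith
        field_simp
        ring
      rw [e1, split_int ν hpow 1 a (a^2) (a^3) (a^4) (a^5) _ (hRIint a ha),
        hodd 1 (by decide), hodd 3 (by decide), ← hP1def, ← hP2def]
      simp only [RIf]
      ring
    have hTJ : ∀ a : ℝ, |a| ≤ 1/2 →
        Jff ν a = 1/2 - P1*a + 3/2*P1*a^2 - 2*P2*a^3 + a^4*RJf ν a := by
      intro a ha
      have e1 : Jff ν a = ∫ t, ((1/2:ℝ) + (a-1/2)*(1-2*t)^1 + (3/2*a^2-a)*(1-2*t)^2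
          + (2*a^3-3/2*a^2)*(1-2*t)^3 + (-2*a^3)*(1-2*t)^4
          + a^4*(t*(1-2*t)^4*(5-4*(a*(1-2*t)))/(1-a*(1-2*t))^2)) ∂ν := by
        rw [Jff, hν]
        refine setIntegral_congr_fun hIccMeas fun t ht => ?_
        have hd := hden a t ha ht
        have hne : 1-a*(1-2*t) ≠ 0 := by linarith
        rw [div_eq_iff (pow_ne_zero 2 hne), add_mul, mul_assoc (a^4), div_mul_cancel₀ _ (pow_ne_zero 2 hne)]
        ring
      rw [e1, split_int ν hpow (1/2) (a-1/2) (3/2*a^2-a) (2*a^3-3/2*a^2) (-2*a^3) (a^4) _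
          (hRJint a ha),
        hodd 1 (by decide), hodd 3 (by decide), ← hP1def, ← hP2def]
      simp only [RJf]
      ring
    have hTK : ∀ a : ℝ, |a| ≤ 1/2 →
        Kff ν a = (1-P1)/4 + 3/2*(P1-P2)*a^2 + a^3*RKf ν a := by
      intro a ha
      have e1 : Kff ν a = ∫ t, ((1/4:ℝ) + (3/4*a)*(1-2*t)^1 + (3/2*a^2-1/4)*(1-2*t)^2
          + (-3/4*a)*(1-2*t)^3 + (-3/2*a^2)*(1-2*t)^4
          + a^3*(t*(1-t)*(1-2*t)^3*(10-15*(a*(1-2*t))+6*(a*(1-2*t))^2)/(1-a*(1-2*t))^3)) ∂ν := by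
        rw [Kff, hν]
        refine setIntegral_congr_fun hIccMeas fun t ht => ?_
        have hd := hden a t ha ht
        have hne : 1-a*(1-2*t) ≠ 0 := by linarith
        rw [div_eq_iff (pow_ne_zero 3 hne), add_mul, mul_assoc (a^3), div_mul_cancel₀ _ (pow_ne_zero 3 hne)]
        ring
      rw [e1, split_int ν hpow (1/4) (3/4*a) (3/2*a^2-1/4) (-3/4*a) (-3/2*a^2) (a^3) _
          (hRKint a ha),
        hodd 1 (by decide), hodd 3 (by decide), ← hP1def, ← hP2def]
      simp only [RKf]
      ring
        -- x-denominator bound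
    have hdenx : ∀ x t : ℝ, x ∈ Set.Ioo (1/4:ℝ) 4 → t ∈ Set.Icc (0:ℝ) 1 →
        1/4 ≤ (1-t)*x+t := by
      intro x t hx ht
      have h1 : (1-t)*(1/4) ≤ (1-t)*x :=
        mul_le_mul_of_nonneg_left hx.1.le (by linarith [ht.2])
      linarith [ht.1]
    -- derivative of gg
    set g1 : ℝ → ℝ := fun x => ∫ t, t/((1-t)*x+t)^2 ∂ν with hg1def
    set g2 : ℝ → ℝ := fun x => ∫ t, -2*(t*(1-t))/((1-t)*x+t)^3 ∂ν with hg2def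
    have hball : ∀ x : ℝ, x ∈ Set.Ioo (1/4:ℝ) 4 →
        ∀ y ∈ Metric.ball x (min (x-1/4) (4-x)), y ∈ Set.Ioo (1/4:ℝ) 4 := by
      intro x hx y hy
      rw [Metric.mem_ball, Real.dist_eq] at hy
      have h1 := abs_lt.mp hy
      constructor
      · linarith [min_le_left (x-1/4) (4-x), h1.1]
      · linarith [min_le_right (x-1/4) (4-x), h1.2]
    have hDgg : ∀ x ∈ Set.Ioo (1/4:ℝ) 4,
        HasDerivAt (fun y => ∫ t, y/((1-t)*y+t) ∂ν) (g1 x) x := by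
      intro x hx
      have hε : (0:ℝ) < min (x-1/4) (4-x) := lt_min (by linarith [hx.1]) (by linarith [hx.2])
      have H := hasDerivAt_integral_of_dominated_loc_of_deriv_le (μ := ν) (x₀ := x)
        (F := fun y t => y/((1-t)*y+t)) (F' := fun y t => t/((1-t)*y+t)^2)
        (bound := fun _ => (16:ℝ)) (Metric.ball_mem_nhds x hε)
        (Filter.Eventually.of_forall fun y => (by fun_prop : Measurable fun t : ℝ => y/((1-t)*y+t)).aestronglyMeasurable)
        (by
          refine hintb _ 16 (by fun_prop) ?_
          intro t ht
          have hd := hdenx x t hx ht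
          rw [Real.norm_eq_abs, abs_div, abs_of_pos (by linarith : (0:ℝ) < (1-t)*x+t),
            div_le_iff₀ (by linarith)]
          have : |x| = x := abs_of_pos (by linarith [hx.1])
          rw [this]
          linarith [hx.2])
        ((by fun_prop : Measurable fun t : ℝ => t/((1-t)*x+t)^2).aestronglyMeasurable)
        (by
          rw [hν]
          refine (ae_restrict_iff' hIccMeas).2 (ae_of_all _ ?_)
          intro t ht y hy
          have hd := hdenx y t (hball x hx y hy) ht
          rw [Real.norm_eq_abs, abs_div, abs_of_pos (by positivity : (0:ℝ) < ((1-t)*y+t)^2),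
            div_le_iff₀ (by positivity)]
          have h2 : |t| ≤ 1 := by rw [abs_of_nonneg ht.1]; exact ht.2
          have h4 : (1/16:ℝ) ≤ ((1-t)*y+t)^2 := by
            calc (1/16:ℝ) = (1/4)^2 := by norm_num
              _ ≤ ((1-t)*y+t)^2 := pow_le_pow_left₀ (by norm_num) hd 2
          show |t| ≤ 16 * ((1-t)*y+t)^2
          linarith)
        (integrable_const _)
        (by
          rw [hν]
          refine (ae_restrict_iff' hIccMeas).2 (ae_of_all _ ?_)
          intro t ht y hy
          have hd := hdenx y t (hball x hx y hy) ht
          have hne : (1-t)*y+t ≠ 0 := by linarith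
          have h1 : HasDerivAt (fun y : ℝ => (1-t)*y+t) (1-t) y := by
            simpa using ((hasDerivAt_id y).const_mul (1-t)).add_const t
          have h2 := (hasDerivAt_id y).fun_div h1 hne
          refine h2.congr_deriv ?_
          simp only [id_eq]
          field_simp
          ring)
      rw [hg1def]
      exact H.2
    have hDg1 : ∀ x ∈ Set.Ioo (1/4:ℝ) 4, HasDerivAt g1 (g2 x) x := by
      intro x hx
      have hε : (0:ℝ) < min (x-1/4) (4-x) := lt_min (by linarith [hx.1]) (by linarith [hx.2])
      have H := hasDerivAt_integral_of_dominated_loc_of_deriv_le (μ := ν) (x₀ := x)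
        (F := fun y t => t/((1-t)*y+t)^2) (F' := fun y t => -2*(t*(1-t))/((1-t)*y+t)^3)
        (bound := fun _ => (128:ℝ)) (Metric.ball_mem_nhds x hε)
        (Filter.Eventually.of_forall fun y => (by fun_prop : Measurable fun t : ℝ => t/((1-t)*y+t)^2).aestronglyMeasurable)
        (by
          refine hintb _ 16 (by fun_prop) ?_
          intro t ht
          have hd := hdenx x t hx ht
          rw [Real.norm_eq_abs, abs_div, abs_of_pos (by positivity : (0:ℝ) < ((1-t)*x+t)^2),
            div_le_iff₀ (by positivity)]
          have h2 : |t| ≤ 1 := by rw [abs_of_nonneg ht.1]; exact ht.2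
          nlinarith)
        ((by fun_prop : Measurable fun t : ℝ => -2*(t*(1-t))/((1-t)*x+t)^3).aestronglyMeasurable)
        (by
          rw [hν]
          refine (ae_restrict_iff' hIccMeas).2 (ae_of_all _ ?_)
          intro t ht y hy
          have hd := hdenx y t (hball x hx y hy) ht
          have h3 : (1/64:ℝ) ≤ ((1-t)*y+t)^3 := by
            calc (1/64:ℝ) = (1/4)^3 := by norm_num
              _ ≤ ((1-t)*y+t)^3 := pow_le_pow_left₀ (by norm_num) hd 3
          rw [Real.norm_eq_abs, abs_div, abs_of_pos (by positivity : (0:ℝ) < ((1-t)*y+t)^3),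
            div_le_iff₀ (by positivity)]
          have h2 : |(-2)*(t*(1-t))| ≤ 2 := by
            rw [abs_mul]
            have : |t*(1-t)| ≤ 1 := by
              rw [abs_mul]
              calc |t| * |1-t| ≤ 1 * 1 := by
                    gcongr <;> rw [abs_le] <;> constructor <;> linarith [ht.1, ht.2]
                _ = 1 := by norm_num
            rw [show |(-2:ℝ)| = 2 by norm_num]
            linarith
          show |(-2)*(t*(1-t))| ≤ 128 * ((1-t)*y+t)^3
          calc |(-2)*(t*(1-t))| ≤ 2 := h2
            _ ≤ 128 * ((1-t)*y+t)^3 := by nlinarith [h3]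
        )
        (integrable_const _)
        (by
          rw [hν]
          refine (ae_restrict_iff' hIccMeas).2 (ae_of_all _ ?_)
          intro t ht y hy
          have hd := hdenx y t (hball x hx y hy) ht
          have hne : (1-t)*y+t ≠ 0 := by linarith
          have h1 : HasDerivAt (fun y : ℝ => (1-t)*y+t) (1-t) y := by
            simpa using ((hasDerivAt_id y).const_mul (1-t)).add_const t
          have hp2 : HasDerivAt (fun y : ℝ => ((1-t)*y+t)^2) (2*((1-t)*y+t)^1*(1-t)) y :=
            by simpa using h1.fun_pow 2
          have h2 := (hasDerivAt_const y t).fun_div hp2 (pow_ne_zero 2 hne)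
          refine h2.congr_deriv ?_
          field_simp
          ring)
      rw [hg2def]
      exact H.2
    -- derivatives of f
    have hf1 : ∀ x ∈ Set.Ioo (1/4:ℝ) 4, HasDerivAt f (g1 x) x := by
      intro x hx
      refine (hDgg x hx).congr_of_eventuallyEq ?_
      filter_upwards [Ioi_mem_nhds (show (0:ℝ) < x by linarith [hx.1])] with y hy
      exact hf y hy
    have hderiv1 : ∀ x ∈ Set.Ioo (1/4:ℝ) 4, deriv f x = g1 x := fun x hx => (hf1 x hx).deriv
    have hf2 : ∀ x ∈ Set.Ioo (1/4:ℝ) 4, HasDerivAt (deriv f) (g2 x) x := by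
      intro x hx
      refine (hDg1 x hx).congr_of_eventuallyEq ?_
      filter_upwards [Ioo_mem_nhds hx.1 hx.2] with y hy
      exact hderiv1 y hy
    have hd2 : ∀ x ∈ Set.Ioo (1/4:ℝ) 4, iteratedDeriv 2 f x = g2 x := by
      intro x hx
      rw [show (2:ℕ) = 1+1 from rfl, iteratedDeriv_succ, iteratedDeriv_one]
      exact (hf2 x hx).deriv
        -- c = (1-a)/(1+a) lands in (1/4,4)
    have hc : ∀ a : ℝ, |a| ≤ 1/5 → (1-a)/(1+a) ∈ Set.Ioo (1/4:ℝ) 4 := by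
      intro a ha
      have hA := abs_le.mp ha
      have h1 : (0:ℝ) < 1+a := by linarith
      constructor
      · rw [lt_div_iff₀ h1]; linarith
      · rw [div_lt_iff₀ h1]; linarith
    have hI1lb : ∀ a : ℝ, |a| ≤ 1/2 → (2:ℝ)/3 ≤ I1f ν a := by
      intro a ha
      have h0 : ∫ _, (2/3:ℝ) ∂ν ≤ I1f ν a := by
        rw [I1f, hν]
        refine setIntegral_mono_on (integrable_const _) ?_ hIccMeas ?_
        · exact hI1int a ha
        · intro t ht
          have hd := hden a t ha ht
          have hub := (abs_le.mp (huab a t ha ht)).1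
          rw [le_div_iff₀ (by linarith)]
          linarith
      have h1 : ∫ _, (2/3:ℝ) ∂ν = 2/3 := by simp [measure_univ]
      linarith
    -- value conversions at c = (1-a)/(1+a)
    have hgc : ∀ a : ℝ, |a| ≤ 1/5 → f ((1-a)/(1+a)) = (1-a) * I1f ν a := by
      intro a ha
      have hA := abs_le.mp ha
      have h1 : (0:ℝ) < 1+a := by linarith
      have hcpos : (0:ℝ) < (1-a)/(1+a) := div_pos (by linarith) h1
      rw [hf _ hcpos, I1f, ← integral_const_mul, hν]
      refine setIntegral_congr_fun hIccMeas fun t ht => ?_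
      have hd := hden a t (by linarith : |a| ≤ 1/2) ht
      have hdx := hdenx _ t (hc a ha) ht
      have hne1 : 1-a*(1-2*t) ≠ 0 := by linarith
      have hrw : (1-t)*((1-a)/(1+a))+t = (1-a*(1-2*t))/(1+a) := by
        field_simp
        ring
      rw [hrw]
      field_simp
      try ring
    have hg1c : ∀ a : ℝ, |a| ≤ 1/5 → deriv f ((1-a)/(1+a)) = (1+a)^2 * Jff ν a := by
      intro a ha
      have hA := abs_le.mp ha
      have h1 : (0:ℝ) < 1+a := by linarith
      rw [hderiv1 _ (hc a ha)]
      simp only [hg1def]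
      rw [Jff, ← integral_const_mul, hν]
      refine setIntegral_congr_fun hIccMeas fun t ht => ?_
      have hd := hden a t (by linarith : |a| ≤ 1/2) ht
      have hdx := hdenx _ t (hc a ha) ht
      have hne1 : 1-a*(1-2*t) ≠ 0 := by linarith
      have hrw : (1-t)*((1-a)/(1+a))+t = (1-a*(1-2*t))/(1+a) := by
        field_simp
        ring
      rw [hrw]
      field_simp
      try ring
    have hg2c : ∀ a : ℝ, |a| ≤ 1/5 →
        iteratedDeriv 2 f ((1-a)/(1+a)) = -2*(1+a)^3 * Kff ν a := by
      intro a ha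
      have hA := abs_le.mp ha
      have h1 : (0:ℝ) < 1+a := by linarith
      rw [hd2 _ (hc a ha)]
      simp only [hg2def]
      rw [Kff, ← integral_const_mul, hν]
      refine setIntegral_congr_fun hIccMeas fun t ht => ?_
      have hd := hden a t (by linarith : |a| ≤ 1/2) ht
      have hdx := hdenx _ t (hc a ha) ht
      have hne1 : 1-a*(1-2*t) ≠ 0 := by linarith
      have hrw : (1-t)*((1-a)/(1+a))+t = (1-a*(1-2*t))/(1+a) := by
        field_simp
        ring
      rw [hrw]
      field_simp
      try ring
    set EE : ℝ → ℝ := fun b => Epoly b P1 P2 (RIf ν b) (RJf ν b) (RKf ν b) with hEEdef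
    have hmain : ∀ a : ℝ, a ≠ 0 → |a| ≤ 1/5 → scurv f a =
        (18*P1 - 12) + ((100*P2 - 20 - 20*P1 - 60*P1^2) + a * EE a)
          * (a^2/(2*(1-a)*(1+a)*(I1f ν a)^2)) := by
      intro a hane ha
      have hA := abs_le.mp ha
      have h1 : (0:ℝ) < 1+a := by linarith
      have h2 : (0:ℝ) < 1-a := by linarith
      have hI1 := hI1lb a (by linarith)
      have hI1ne : I1f ν a ≠ 0 := by linarith
      have heq1 : scurv f a =
          ((-28*a^2*(1+a)^2*(Jff ν a)^2 + 4*a*(a^2+7*a-6)*(1+a)*(Jff ν a)*(I1f ν a)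
            - 32*a^2*(1-a)*(1+a)*(Kff ν a)*(I1f ν a)
            + 4*(1-a^2)^2*(I1f ν a)^3 + (3*a^3+5*a^2+8*a-4)*(1-a)*(I1f ν a)^2))
          / (2*a^2*(1-a)*(1+a)*(I1f ν a)^2) := by
        simp only [scurv]
        exact scurv_algebra a (I1f ν a) (Jff ν a) (Kff ν a) _ _ _ hane h1.ne' h2.ne'
          hI1ne (hgc a ha) (hg1c a ha) (hg2c a ha)
      have hkp := key_poly a P1 P2 (RIf ν a) (RJf ν a) (RKf ν a) (I1f ν a) (Jff ν a)
        (Kff ν a) (hTI a (by linarith)) (hTJ a (by linarith)) (hTK a (by linarith))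
      have ha2 : a^2 ≠ 0 := pow_ne_zero 2 hane
      have hDne : 2*a^2*(1-a)*(1+a)*(I1f ν a)^2 ≠ 0 :=
        mul_ne_zero (mul_ne_zero (mul_ne_zero (mul_ne_zero two_ne_zero ha2) h2.ne')
          h1.ne') (pow_ne_zero 2 hI1ne)
      have hXD : a^4 = (a^2/(2*(1-a)*(1+a)*(I1f ν a)^2))
          * (2*a^2*(1-a)*(1+a)*(I1f ν a)^2) := by
        field_simp
      rw [heq1]
      simp only [hEEdef]
      rw [div_eq_iff hDne]
      have hN : (-28*a^2*(1+a)^2*(Jff ν a)^2 + 4*a*(a^2+7*a-6)*(1+a)*(Jff ν a)*(I1f ν a)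
            - 32*a^2*(1-a)*(1+a)*(Kff ν a)*(I1f ν a)
            + 4*(1-a^2)^2*(I1f ν a)^3 + (3*a^3+5*a^2+8*a-4)*(1-a)*(I1f ν a)^2)
          = (18*P1-12)*(2*a^2*(1-a)*(1+a)*(I1f ν a)^2)
            + a^4*((100*P2 - 20 - 20*P1 - 60*P1^2)
              + a * Epoly a P1 P2 (RIf ν a) (RJf ν a) (RKf ν a)) := by
        linear_combination hkp
      rw [hN]
      linear_combination ((100*P2 - 20 - 20*P1 - 60*P1^2)
        + a * Epoly a P1 P2 (RIf ν a) (RJf ν a) (RKf ν a)) * hXD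
        -- continuity at 0 of the remainder integrals
    have hball12 : ∀ a : ℝ, a ∈ Metric.ball (0:ℝ) (1/2) → |a| ≤ 1/2 := by
      intro a hamem
      rw [Metric.mem_ball, Real.dist_eq, sub_zero] at hamem
      linarith
    have hcRI : ContinuousAt (RIf ν) 0 := by
      refine continuousAt_of_dominated ?_ ?_ (integrable_const (2:ℝ)) ?_
      · exact Filter.Eventually.of_forall fun a =>
          (by fun_prop : Measurable fun t : ℝ => (1-2*t)^5/(1-a*(1-2*t))).aestronglyMeasurable
      · filter_upwards [Metric.ball_mem_nhds (0:ℝ) (by norm_num : (0:ℝ) < 1/2)] with a hamem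
        have ha := hball12 a hamem
        rw [hν]
        refine (ae_restrict_iff' hIccMeas).2 (ae_of_all _ ?_)
        intro t ht
        have hd := hden a t ha ht
        have h1 : |(1-2*t)^5| ≤ 1 := by
          rw [abs_pow]; exact pow_le_one₀ (abs_nonneg _) (hs1 t ht)
        rw [Real.norm_eq_abs, abs_div, abs_of_pos (by linarith : (0:ℝ) < 1-a*(1-2*t)),
          div_le_iff₀ (by linarith)]
        linarith
      · refine ae_of_all _ fun t => ?_
        exact ContinuousAt.div (by fun_prop) (by fun_prop) (by norm_num)
    have hcRJ : ContinuousAt (RJf ν) 0 := by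
      refine continuousAt_of_dominated ?_ ?_ (integrable_const (28:ℝ)) ?_
      · exact Filter.Eventually.of_forall fun a =>
          (by fun_prop : Measurable fun t : ℝ =>
            t*(1-2*t)^4*(5-4*(a*(1-2*t)))/(1-a*(1-2*t))^2).aestronglyMeasurable
      · filter_upwards [Metric.ball_mem_nhds (0:ℝ) (by norm_num : (0:ℝ) < 1/2)] with a hamem
        have ha := hball12 a hamem
        rw [hν]
        refine (ae_restrict_iff' hIccMeas).2 (ae_of_all _ ?_)
        intro t ht
        have hd := hden a t ha ht
        have hu := abs_le.mp (huab a t ha ht)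
        have h1 : |(1-2*t)^4| ≤ 1 := by
          rw [abs_pow]; exact pow_le_one₀ (abs_nonneg _) (hs1 t ht)
        have h2 : |t| ≤ 1 := by rw [abs_of_nonneg ht.1]; exact ht.2
        have h3 : |5-4*(a*(1-2*t))| ≤ 7 := by rw [abs_le]; constructor <;> linarith
        have h4 : |t*(1-2*t)^4*(5-4*(a*(1-2*t)))| ≤ 7 := by
          rw [abs_mul, abs_mul]
          calc |t| * |(1-2*t)^4| * |5-4*(a*(1-2*t))| ≤ 1 * 1 * 7 := by
                gcongr <;> first | exact h1 | exact h2 | exact h3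
            _ = 7 := by norm_num
        rw [Real.norm_eq_abs, abs_div, abs_of_pos (by positivity : (0:ℝ) < (1-a*(1-2*t))^2),
          div_le_iff₀ (by positivity)]
        nlinarith
      · refine ae_of_all _ fun t => ?_
        exact ContinuousAt.div (by fun_prop) (by fun_prop) (by norm_num)
    have hcRK : ContinuousAt (RKf ν) 0 := by
      refine continuousAt_of_dominated ?_ ?_ (integrable_const (40:ℝ)) ?_
      · exact Filter.Eventually.of_forall fun a =>
          (by fun_prop : Measurable fun t : ℝ =>
            t*(1-t)*(1-2*t)^3*(10-15*(a*(1-2*t))+6*(a*(1-2*t))^2)/(1-a*(1-2*t))^3).aestronglyMeasurable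
      · filter_upwards [Metric.ball_mem_nhds (0:ℝ) (by norm_num : (0:ℝ) < 1/2)] with a hamem
        have ha := hball12 a hamem
        rw [hν]
        refine (ae_restrict_iff' hIccMeas).2 (ae_of_all _ ?_)
        intro t ht
        have hd := hden a t ha ht
        have hu := abs_le.mp (huab a t ha ht)
        have husq : (a*(1-2*t))^2 ≤ 1/4 := by nlinarith
        have h1 : |(1-2*t)^3| ≤ 1 := by
          rw [abs_pow]; exact pow_le_one₀ (abs_nonneg _) (hs1 t ht)
        have h2 : |t*(1-t)| ≤ 1/4 := by
          rw [abs_of_nonneg (mul_nonneg ht.1 (by linarith [ht.2]) : (0:ℝ) ≤ t*(1-t))]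
          nlinarith [sq_nonneg (1-2*t)]
        have h3 : |10-15*(a*(1-2*t))+6*(a*(1-2*t))^2| ≤ 19 := by
          rw [abs_le]; constructor <;> nlinarith
        have h4 : |t*(1-t)*(1-2*t)^3*(10-15*(a*(1-2*t))+6*(a*(1-2*t))^2)| ≤ 19/4 := by
          rw [abs_mul, abs_mul]
          calc |t*(1-t)| * |(1-2*t)^3| * |10-15*(a*(1-2*t))+6*(a*(1-2*t))^2|
              ≤ (1/4) * 1 * 19 := by gcongr <;> first | exact h1 | exact h2 | exact h3
            _ = 19/4 := by norm_num
        have h5 : (1/8:ℝ) ≤ (1-a*(1-2*t))^3 := by nlinarith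
        rw [Real.norm_eq_abs, abs_div, abs_of_pos (by positivity : (0:ℝ) < (1-a*(1-2*t))^3),
          div_le_iff₀ (by positivity)]
        nlinarith
      · refine ae_of_all _ fun t => ?_
        exact ContinuousAt.div (by fun_prop) (by fun_prop) (by norm_num)
    have hcI1 : ContinuousAt (I1f ν) 0 := by
      refine continuousAt_of_dominated ?_ ?_ (integrable_const (2:ℝ)) ?_
      · exact Filter.Eventually.of_forall fun a =>
          (by fun_prop : Measurable fun t : ℝ => 1/(1-a*(1-2*t))).aestronglyMeasurable
      · filter_upwards [Metric.ball_mem_nhds (0:ℝ) (by norm_num : (0:ℝ) < 1/2)] with a hamem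
        have ha := hball12 a hamem
        rw [hν]
        refine (ae_restrict_iff' hIccMeas).2 (ae_of_all _ ?_)
        intro t ht
        have hd := hden a t ha ht
        rw [Real.norm_eq_abs, abs_div, abs_of_pos (by linarith : (0:ℝ) < 1-a*(1-2*t)),
          div_le_iff₀ (by linarith)]
        simp only [abs_one]
        linarith
      · refine ae_of_all _ fun t => ?_
        exact ContinuousAt.div (by fun_prop) (by fun_prop) (by norm_num)
    have hcEE : ContinuousAt EE 0 := by
      have hEp : Continuous fun v : ℝ × ℝ × ℝ × ℝ => Epoly v.1 P1 P2 v.2.1 v.2.2.1 v.2.2.2 := by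
        unfold Epoly
        fun_prop
      have hpair : ContinuousAt (fun a : ℝ => (a, RIf ν a, RJf ν a, RKf ν a)) 0 :=
        continuousAt_id.prodMk (hcRI.prodMk (hcRJ.prodMk hcRK))
      have hcomp := hEp.continuousAt.comp hpair
      simpa only [hEEdef, Function.comp_def] using hcomp
    have hI10 : I1f ν 0 = 1 := by
      rw [I1f]
      have he : (fun t : ℝ => 1/(1-(0:ℝ)*(1-2*t))) = fun _ : ℝ => (1:ℝ) := by
        funext t; norm_num
      rw [he, integral_const]
      simp [measure_univ]
    have htarget : 6 + 36 * iteratedDeriv 2 f 1 = 18*P1 - 12 := by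
      have h1 : iteratedDeriv 2 f 1 = -2*(1+0)^3 * Kff ν 0 := by
        have h := hg2c 0 (by norm_num)
        norm_num at h ⊢
        exact h
      have h2 := hTK 0 (by norm_num)
      rw [h1, h2]
      ring
    constructor
    · -- the limit
      rw [htarget]
      have hcont : ContinuousAt (fun b : ℝ => (18*P1 - 12)
          + ((100*P2 - 20 - 20*P1 - 60*P1^2) + b * EE b)
            * (b^2/(2*(1-b)*(1+b)*(I1f ν b)^2))) 0 := by
        have hden0 : 2*(1-(0:ℝ))*(1+(0:ℝ))*(I1f ν 0)^2 ≠ 0 := by rw [hI10]; norm_num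
        refine continuousAt_const.add (ContinuousAt.mul
          (continuousAt_const.add (continuousAt_id.mul hcEE)) (ContinuousAt.div (by fun_prop) ?_ hden0))
        exact ((continuousAt_const.mul (continuousAt_const.sub continuousAt_id)).mul
          (continuousAt_const.add continuousAt_id)).mul (hcI1.pow 2)
      have hT := (hcont.tendsto).mono_left (nhdsWithin_le_nhds (s := {(0:ℝ)}ᶜ))
      have hval : (18*P1 - 12) + ((100*P2 - 20 - 20*P1 - 60*P1^2) + 0 * EE 0)
          * ((0:ℝ)^2/(2*(1-0)*(1+0)*(I1f ν 0)^2)) = 18*P1 - 12 := by norm_num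
      rw [hval] at hT
      refine hT.congr' ?_
      have hball5 : Metric.ball (0:ℝ) (1/5) ∈ 𝓝[≠] (0:ℝ) :=
        nhdsWithin_le_nhds (Metric.ball_mem_nhds _ (by norm_num))
      filter_upwards [hball5, self_mem_nhdsWithin] with b hb1 hb2
      have hbne : b ≠ 0 := hb2
      have hb5 : |b| ≤ 1/5 := by
        rw [Metric.mem_ball, Real.dist_eq, sub_zero] at hb1
        linarith
      exact (hmain b hbne hb5).symm
    · -- local minimum
      have hM : (0:ℝ) < |EE 0| + 1 := by positivity
      have hEb : EE ⁻¹' Metric.ball (EE 0) 1 ∈ 𝓝 (0:ℝ) := hcEE (Metric.ball_mem_nhds _ one_pos)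
      obtain ⟨δ, hδpos, hδsub⟩ := Metric.mem_nhds_iff.mp hEb
      refine ⟨min (min δ (1/5)) ((100*P2 - 20 - 20*P1 - 60*P1^2)/(|EE 0| + 1)),
        lt_min (lt_min hδpos (by norm_num)) (div_pos hw4 hM), ?_⟩
      intro a hapos haε
      have hane : a ≠ 0 := by
        intro h
        rw [h] at hapos
        simp at hapos
      have h5 : |a| ≤ 1/5 := by
        have := lt_of_lt_of_le haε (le_trans (min_le_left _ _) (min_le_right _ _))
        linarith
      have hδa : |a| < δ := lt_of_lt_of_le haε (le_trans (min_le_left _ _) (min_le_left _ _))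
      have hwa : |a| < (100*P2 - 20 - 20*P1 - 60*P1^2)/(|EE 0| + 1) :=
        lt_of_lt_of_le haε (min_le_right _ _)
      have hEEa : |EE a| ≤ |EE 0| + 1 := by
        have hmem : EE a ∈ Metric.ball (EE 0) 1 := by
          apply hδsub
          rw [Metric.mem_ball, Real.dist_eq, sub_zero]
          exact hδa
        rw [Metric.mem_ball, Real.dist_eq] at hmem
        have h3 : |EE a| ≤ |EE a - EE 0| + |EE 0| := by
          simpa using abs_add_le (EE a - EE 0) (EE 0)
        linarith [(abs_lt.mp hmem).2, (abs_lt.mp hmem).1]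
      rw [htarget, hmain a hane h5, ge_iff_le, le_add_iff_nonneg_right]
      apply mul_nonneg
      · have h1 : |a * EE a| ≤ |a| * (|EE 0| + 1) := by
          rw [abs_mul]
          exact mul_le_mul_of_nonneg_left hEEa (abs_nonneg a)
        have h2 : |a| * (|EE 0| + 1) < 100*P2 - 20 - 20*P1 - 60*P1^2 := by
          rw [← lt_div_iff₀ hM]
          exact hwa
        linarith [neg_abs_le (a * EE a)]
      · have hA := abs_le.mp h5
        have hI1 := hI1lb a (by linarith)
        have hDpos : (0:ℝ) < 2*(1-a)*(1+a)*(I1f ν a)^2 := by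
          apply mul_pos (mul_pos (mul_pos two_pos (by linarith)) (by linarith))
          exact pow_pos (by linarith) 2
        exact div_nonneg (sq_nonneg a) hDpos.le
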